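/- arXiv:2309.07787 — 2 statements merged into one kernel-verified Lean document; each statement's English description precedes it below -/
import Mathlib

section
/- Recursion rule between interior entries of an optimal inexactness schedule (equation (3.15)). Let N ∈ ℕ, δ̄ > 0, 0 ≤ m < 1 < M, r > 0, and let a, b ∈ ℝ^N have strictly positive entries. Consider the master problem: minimize ∑_{k=0}^{N−1} a_k δ_k over δ with m·δ̄ ≤ δ_k ≤ M·δ̄ and δ_k > 0 for every k, subject to ∑_{k=0}^{N−1} b_k δ_k^{−r} = (∑_{k=0}^{N−1} b_k)·δ̄^{−r}. If δ* is an optimal solution and two indices k, k̂ ∈ {0,…,N−1} satisfy m·δ̄ < δ*_k < M·δ̄ and m·δ̄ < δ*_{k̂} < M·δ̄, then δ*_{k̂} = ( (b_{k̂}·a_k) / (a_{k̂}·b_k) )^{1/(r+1)} · δ*_k. -/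
/-- Recursion rule between interior entries of an optimal inexactness
schedule (equation (3.15)). -/
theorem recursion_rule_optimal_schedule
    (N : ℕ) (δbar m M r : ℝ)
    (hδbar : 0 < δbar) (hm : 0 ≤ m) (hm1 : m < 1) (hM : 1 < M) (hr : 0 < r)
    (a b : Fin N → ℝ) (ha : ∀ k, 0 < a k) (hb : ∀ k, 0 < b k)
    (δs : Fin N → ℝ)
    (hfeas : ∀ k, m * δbar ≤ δs k ∧ δs k ≤ M * δbar ∧ 0 < δs k)
    (hbudget : ∑ k, b k * δs k ^ (-r) = (∑ k, b k) * δbar ^ (-r))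
    (hopt : ∀ δ : Fin N → ℝ,
      (∀ k, m * δbar ≤ δ k ∧ δ k ≤ M * δbar ∧ 0 < δ k) →
      (∑ k, b k * δ k ^ (-r) = (∑ k, b k) * δbar ^ (-r)) →
      ∑ k, a k * δs k ≤ ∑ k, a k * δ k)
    (k khat : Fin N)
    (hk : δs k ∈ Set.Ioo (m * δbar) (M * δbar))
    (hkhat : δs khat ∈ Set.Ioo (m * δbar) (M * δbar)) :
    δs khat = ((b khat * a k) / (a khat * b k)) ^ (1 / (r + 1)) * δs k := by
  obtain ⟨hk1, hk2⟩ := hk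
  obtain ⟨hkh1, hkh2⟩ := hkhat
  have hmδ : 0 ≤ m * δbar := mul_nonneg hm hδbar.le
  set p := δs k with hp_def
  set q := δs khat with hq_def
  have hp : 0 < p := lt_of_le_of_lt hmδ hk1
  have hq : 0 < q := lt_of_le_of_lt hmδ hkh1
  by_cases hkk : k = khat
  · subst hkk
    have h1 : (b k * a k) / (a k * b k) = 1 := by
      rw [mul_comm (a k)]
      exact div_self (by have h1 := ha k; have h2 := hb k; positivity)
    rw [h1, Real.one_rpow, one_mul]
  · -- main case: k ≠ khat
    have hne : k ≠ khat := hkk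
    set c := b k * p ^ (-r) + b khat * q ^ (-r) with hc_def
    set u : ℝ → ℝ := fun t => (c - b k * (p + t) ^ (-r)) / b khat with hu_def
    have hbkh : (b khat) ≠ 0 := (hb khat).ne'
    have hu0 : u 0 = q ^ (-r) := by
      simp only [hu_def, hc_def, add_zero]
      field_simp
      ring
    have hu0pos : 0 < u 0 := by rw [hu0]; positivity
    set y : ℝ → ℝ := fun t => u t ^ (-(1/r)) with hy_def
    have hy0 : y 0 = q := by
      have hex : (-r) * (-(1/r)) = 1 := by field_simp
      calc y 0 = (q ^ (-r)) ^ (-(1/r)) := by rw [hy_def]; simp only []; rw [hu0]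
        _ = q ^ ((-r) * (-(1/r))) := (Real.rpow_mul hq.le _ _).symm
        _ = q := by rw [hex, Real.rpow_one]
    -- derivative of u
    have hx : HasDerivAt (fun t : ℝ => p + t) 1 0 := (hasDerivAt_id 0).const_add p
    have h1d : HasDerivAt (fun t : ℝ => (p + t) ^ (-r)) (1 * (-r) * (p + 0) ^ (-r - 1)) 0 :=
      hx.rpow_const (Or.inl (by simpa using hp.ne'))
    set u' := b k * r * p ^ (-r - 1) / b khat with hu'_def
    have hu' : HasDerivAt u u' 0 := by
      have h := (((h1d.const_mul (b k)).const_sub c).div_const (b khat))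
      refine h.congr_deriv ?_
      rw [hu'_def]
      ring_nf
    have hy' : HasDerivAt y (u' * (-(1/r)) * (u 0) ^ (-(1/r) - 1)) 0 :=
      hu'.rpow_const (Or.inl hu0pos.ne')
    set D := u' * (-(1/r)) * (u 0) ^ (-(1/r) - 1) with hD_def
    set φ : ℝ → ℝ := fun t => a k * t + a khat * (y t - q) with hφ_def
    have hφ' : HasDerivAt φ (a k + a khat * D) 0 := by
      have h := ((hasDerivAt_id (0:ℝ)).const_mul (a k)).add ((hy'.sub_const q).const_mul (a khat))
      refine h.congr_deriv ?_
      ring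
    -- local minimality
    have hmin : IsLocalMin φ 0 := by
      have hE1 : ∀ᶠ t in nhds (0:ℝ), p + t ∈ Set.Ioo (m * δbar) (M * δbar) := by
        apply hx.continuousAt.eventually_mem
        apply isOpen_Ioo.mem_nhds
        simpa using Set.mem_Ioo.mpr ⟨hk1, hk2⟩
      have hE2 : ∀ᶠ t in nhds (0:ℝ), u t ∈ Set.Ioi (0:ℝ) :=
        hu'.continuousAt.eventually_mem (isOpen_Ioi.mem_nhds hu0pos)
      have hE3 : ∀ᶠ t in nhds (0:ℝ), y t ∈ Set.Ioo (m * δbar) (M * δbar) := by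
        apply hy'.continuousAt.eventually_mem
        apply isOpen_Ioo.mem_nhds
        rw [hy0]
        exact Set.mem_Ioo.mpr ⟨hkh1, hkh2⟩
      filter_upwards [hE1, hE2, hE3] with t ht1 ht2 ht3
      set δt : Fin N → ℝ := Function.update (Function.update δs khat (y t)) k (p + t)
        with hδt_def
      have hδtk : δt k = p + t := by simp [hδt_def]
      have hδtkh : δt khat = y t := by
        rw [hδt_def, Function.update_of_ne (Ne.symm hne), Function.update_self]
      have hδto : ∀ j, j ≠ k → j ≠ khat → δt j = δs j := by
        intro j hj1 hj2
        rw [hδt_def, Function.update_of_ne hj1, Function.update_of_ne hj2]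
      -- generic sum identity
      have hsum : ∀ g : Fin N → ℝ → ℝ,
          ∑ j, g j (δt j) = ∑ j, g j (δs j)
            + ((g k (p + t) - g k p) + (g khat (y t) - g khat q)) := by
        intro g
        have hss : ∑ j, (g j (δt j) - g j (δs j))
            = ∑ j ∈ ({k, khat} : Finset (Fin N)), (g j (δt j) - g j (δs j)) := by
          refine (Finset.sum_subset (Finset.subset_univ _) ?_).symm
          intro j _ hj
          simp only [Finset.mem_insert, Finset.mem_singleton, not_or] at hj
          rw [hδto j hj.1 hj.2, sub_self]
        rw [Finset.sum_pair hne, Finset.sum_sub_distrib] at hss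
        rw [hδtk, hδtkh] at hss
        have := sub_eq_iff_eq_add.mp hss
        rw [this]
        ring
      -- feasibility of the perturbed schedule
      have hfeasT : ∀ j, m * δbar ≤ δt j ∧ δt j ≤ M * δbar ∧ 0 < δt j := by
        intro j
        by_cases hj1 : j = k
        · subst hj1
          rw [hδtk]
          exact ⟨ht1.1.le, ht1.2.le, lt_of_le_of_lt hmδ ht1.1⟩
        · by_cases hj2 : j = khat
          · subst hj2
            rw [hδtkh]
            exact ⟨ht3.1.le, ht3.2.le, lt_of_le_of_lt hmδ ht3.1⟩
          · rw [hδto j hj1 hj2]; exact hfeas j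
      -- budget of the perturbed schedule
      have hyt : y t ^ (-r) = u t := by
        have hex : (-(1/r)) * (-r) = 1 := by field_simp
        calc y t ^ (-r) = (u t ^ (-(1/r))) ^ (-r) := rfl
          _ = u t ^ ((-(1/r)) * (-r)) := (Real.rpow_mul (le_of_lt ht2) _ _).symm
          _ = u t := by rw [hex, Real.rpow_one]
      have hkey : b k * (p + t) ^ (-r) + b khat * y t ^ (-r)
          = b k * p ^ (-r) + b khat * q ^ (-r) := by
        rw [hyt, hu_def]
        field_simp
        rw [hc_def]
        ring
      have hbudT : ∑ j, b j * δt j ^ (-r) = (∑ j, b j) * δbar ^ (-r) := by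
        have h := hsum (fun j x => b j * x ^ (-r))
        rw [h, ← hbudget]
        have : (b k * (p + t) ^ (-r) - b k * p ^ (-r))
            + (b khat * y t ^ (-r) - b khat * q ^ (-r)) = 0 := by linarith [hkey]
        linarith [this]
      -- optimality gives the inequality
      have hle := hopt δt hfeasT hbudT
      have hobj := hsum (fun j x => a j * x)
      have hφ0 : φ 0 = 0 := by simp [hφ_def, hy0]
      have hφt : φ t = (a k * (p + t) - a k * p) + (a khat * (y t) - a khat * q) := by
        simp only [hφ_def]; ring
      rw [hφ0]
      rw [hobj] at hle
      linarith [hle]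
    -- first-order condition
    have hzero : a k + a khat * D = 0 := hmin.hasDerivAt_eq_zero hφ'
    -- compute D
    have hpinv : p ^ (-r - 1) = (p ^ (r + 1))⁻¹ := by
      rw [show (-r - 1 : ℝ) = -(r + 1) by ring, Real.rpow_neg hp.le]
    have hDe : D = -(b k * (p ^ (r + 1))⁻¹ * q ^ (r + 1) / b khat) := by
      rw [hD_def, hu'_def, hu0, ← Real.rpow_mul hq.le]
      have hex : (-r) * (-(1/r) - 1) = r + 1 := by field_simp; ring
      rw [hex, hpinv]
      field_simp
    have hp1 : (0:ℝ) < p ^ (r + 1) := Real.rpow_pos_of_pos hp _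
    have hkey2 : a khat * b k * q ^ (r + 1) = b khat * a k * p ^ (r + 1) := by
      rw [hDe] at hzero
      field_simp at hzero
      linarith [hzero]
    have hqkey : q ^ (r + 1) = (b khat * a k) / (a khat * b k) * p ^ (r + 1) := by
      have h1 := ha khat; have h2 := hb k
      rw [div_mul_eq_mul_div, eq_div_iff (by positivity : a khat * b k ≠ 0)]
      linarith [hkey2]
    have hr1 : (r + 1) * (1 / (r + 1)) = 1 := by field_simp
    calc q = q ^ ((r + 1) * (1 / (r + 1))) := by rw [hr1, Real.rpow_one]
      _ = (q ^ (r + 1)) ^ (1 / (r + 1)) := Real.rpow_mul hq.le _ _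
      _ = ((b khat * a k) / (a khat * b k) * p ^ (r + 1)) ^ (1 / (r + 1)) := by rw [hqkey]
      _ = ((b khat * a k) / (a khat * b k)) ^ (1 / (r + 1)) * (p ^ (r + 1)) ^ (1 / (r + 1)) := by
          have h1 := ha k; have h2 := ha khat; have h3 := hb k; have h4 := hb khat
          exact Real.mul_rpow (by positivity) hp1.le
      _ = ((b khat * a k) / (a khat * b k)) ^ (1 / (r + 1)) * p := by
          rw [← Real.rpow_mul hp.le, hr1, Real.rpow_one]
end

section
/- Recursion rule between interior entries of an optimal work allocation (equation (3.16)). Let N ∈ ℕ, r > 0, let a, b ∈ ℝ^N have strictly positive entries, and let 0 < ω_M < ω̄/N < ω_m. Consider the problem: minimize ∑_{k=0}^{N−1} a_k·(ω_k/b_k)^{−1/r} over vectors ω with ω_M ≤ ω_k ≤ ω_m for every k, subject to ∑_{k=0}^{N−1} ω_k = ω̄. If ω* is an optimal solution and two indices k, k̂ ∈ {0,…,N−1} satisfy ω_M < ω*_k < ω_m and ω_M < ω*_{k̂} < ω_m, then ω*_{k̂} = ( (b_{k̂}·a_{k̂}^r) / (b_k·a_k^r) )^{1/(r+1)} · ω*_k.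 -/
/-- Recursion rule between interior entries of an optimal work allocation
(equation (3.16)). -/
theorem recursion_rule_optimal_work
    (N : ℕ) (r ωM ωm ωbar : ℝ) (hr : 0 < r)
    (a b : Fin N → ℝ) (ha : ∀ k, 0 < a k) (hb : ∀ k, 0 < b k)
    (hωM : 0 < ωM) (h1 : ωM < ωbar / N) (h2 : ωbar / N < ωm)
    (ωs : Fin N → ℝ)
    (hfeas : ∀ k, ωM ≤ ωs k ∧ ωs k ≤ ωm)
    (hbudget : ∑ k, ωs k = ωbar)
    (hopt : ∀ ω : Fin N → ℝ,
      (∀ k, ωM ≤ ω k ∧ ω k ≤ ωm) →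
      (∑ k, ω k = ωbar) →
      ∑ k, a k * (ωs k / b k) ^ (-(1 / r)) ≤
        ∑ k, a k * (ω k / b k) ^ (-(1 / r)))
    (k khat : Fin N)
    (hk : ωs k ∈ Set.Ioo ωM ωm)
    (hkhat : ωs khat ∈ Set.Ioo ωM ωm) :
    ωs khat = ((b khat * a khat ^ r) / (b k * a k ^ r)) ^ (1 / (r + 1)) * ωs k := by
  obtain ⟨hkM, hkm⟩ := hk
  obtain ⟨hhM, hhm⟩ := hkhat
  by_cases hkk : khat = k
  · have hpos : (0:ℝ) < b k * a k ^ r := mul_pos (hb k) (Real.rpow_pos_of_pos (ha k) r)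
    rw [hkk, div_self hpos.ne', Real.one_rpow, one_mul]
  have hkk' : k ≠ khat := fun h => hkk h.symm
  have hbk := hb k; have hbkh := hb khat
  have hak := ha k; have hakh := ha khat
  have hx : 0 < ωs k := lt_trans hωM hkM
  have hy : 0 < ωs khat := lt_trans hωM hhM
  set p : ℝ := -(1/r) with hp
  have hp0 : p ≠ 0 := by
    have : 0 < 1/r := by positivity
    simp [hp]; linarith
  set x := ωs k with hxdef
  set y := ωs khat with hydef
  set φ : ℝ → ℝ := fun t => a k * (((x + t)/ b k) ^ p) + a khat * (((y - t)/ b khat) ^ p)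
    with hφ
  have hε : 0 < min (min (x - ωM) (ωm - x)) (min (y - ωM) (ωm - y)) := by
    simp only [lt_min_iff, sub_pos]
    exact ⟨⟨hkM, hkm⟩, ⟨hhM, hhm⟩⟩
  -- local minimum of φ at 0
  have hmin : IsLocalMin φ 0 := by
    apply Filter.eventually_of_mem (Metric.ball_mem_nhds 0 hε)
    intro t ht
    rw [Metric.mem_ball, Real.dist_eq, sub_zero] at ht
    have t1 : |t| < x - ωM := lt_of_lt_of_le ht (le_trans (min_le_left _ _) (min_le_left _ _))
    have t2 : |t| < ωm - x := lt_of_lt_of_le ht (le_trans (min_le_left _ _) (min_le_right _ _))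
    have t3 : |t| < y - ωM := lt_of_lt_of_le ht (le_trans (min_le_right _ _) (min_le_left _ _))
    have t4 : |t| < ωm - y := lt_of_lt_of_le ht (le_trans (min_le_right _ _) (min_le_right _ _))
    rw [abs_lt] at t1 t2 t3 t4
    set ω := Function.update (Function.update ωs k (x + t)) khat (y - t) with hω
    have hωkh : ω khat = y - t := Function.update_self _ _ _
    have hωk : ω k = x + t := by
      rw [hω, Function.update_of_ne hkk', Function.update_self]
    have hωo : ∀ j, j ≠ k → j ≠ khat → ω j = ωs j := by
      intro j hjk hjkh
      rw [hω, Function.update_of_ne hjkh, Function.update_of_ne hjk]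
    have hfe : ∀ j, ωM ≤ ω j ∧ ω j ≤ ωm := by
      intro j
      by_cases hj1 : j = khat
      · subst hj1; rw [hωkh]
        constructor <;> linarith [t3.1, t3.2, t4.1, t4.2]
      by_cases hj2 : j = k
      · subst hj2; rw [hωk]
        constructor <;> linarith [t1.1, t1.2, t2.1, t2.2]
      · rw [hωo j hj2 hj1]; exact hfeas j
    have hsum : ∑ j, ω j = ωbar := by
      have : ∑ j, ω j - ∑ j, ωs j = ∑ j, (ω j - ωs j) := (Finset.sum_sub_distrib _ _).symm
      have h2' : ∑ j, (ω j - ωs j) = (ω k - ωs k) + (ω khat - ωs khat) := by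
        apply Finset.sum_eq_add_of_mem k khat (Finset.mem_univ _) (Finset.mem_univ _) hkk'
        intro j _ ⟨hj1, hj2⟩
        rw [hωo j hj1 hj2, sub_self]
      rw [hωk, hωkh] at h2'
      have : ∑ j, ω j - ∑ j, ωs j = 0 := by rw [this, h2']; ring
      linarith [hbudget]
    have hineq := hopt ω hfe hsum
    have hd : ∑ j, (a j * (ω j / b j) ^ p - a j * (ωs j / b j) ^ p)
        = (a k * (ω k / b k) ^ p - a k * (ωs k / b k) ^ p)
          + (a khat * (ω khat / b khat) ^ p - a khat * (ωs khat / b khat) ^ p) := by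
      apply Finset.sum_eq_add_of_mem k khat (Finset.mem_univ _) (Finset.mem_univ _) hkk'
      intro j _ ⟨hj1, hj2⟩
      rw [hωo j hj1 hj2, sub_self]
    rw [Finset.sum_sub_distrib] at hd
    rw [hωk, hωkh] at hd
    have hφ0 : φ 0 = a k * ((x / b k) ^ p) + a khat * ((y / b khat) ^ p) := by
      simp only [hφ, add_zero, sub_zero]
    have hφt : φ t = a k * (((x + t) / b k) ^ p) + a khat * (((y - t) / b khat) ^ p) := rfl
    show φ 0 ≤ φ t
    rw [hφ0, hφt]
    linarith [hd, hineq]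
  -- first-order condition
  have d1 : HasDerivAt (fun t : ℝ => (x + t)/ b k) (1 / b k) 0 := by
    simpa using ((hasDerivAt_id (0:ℝ)).const_add x).div_const (b k)
  have d2 : HasDerivAt (fun t : ℝ => (y - t)/ b khat) ((-1) / b khat) 0 := by
    simpa using ((hasDerivAt_id (0:ℝ)).const_sub y).div_const (b khat)
  have hx0 : x + 0 = x := add_zero x
  have hy0 : y - 0 = y := sub_zero y
  have D1 : HasDerivAt (fun t => a k * (((x + t)/ b k) ^ p))
      (a k * (1 / b k * p * ((x)/ b k) ^ (p - 1))) 0 := by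
    have := (d1.rpow_const (p := p) (Or.inl (by rw [hx0]; positivity))).const_mul (a k)
    simpa [hx0] using this
  have D2 : HasDerivAt (fun t => a khat * (((y - t)/ b khat) ^ p))
      (a khat * ((-1) / b khat * p * ((y)/ b khat) ^ (p - 1))) 0 := by
    have := (d2.rpow_const (p := p) (Or.inl (by rw [hy0]; positivity))).const_mul (a khat)
    simpa [hy0] using this
  have hDer : HasDerivAt φ
      (a k * (1 / b k * p * (x / b k) ^ (p - 1))
        + a khat * ((-1) / b khat * p * (y / b khat) ^ (p - 1))) 0 := D1.add D2
  have h0 : a k * (1 / b k * p * (x / b k) ^ (p - 1))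
      + a khat * ((-1) / b khat * p * (y / b khat) ^ (p - 1)) = 0 := by
    have := hmin.deriv_eq_zero
    rwa [hDer.deriv] at this
  set q : ℝ := p - 1 with hq
  have hq0 : q ≠ 0 := by
    have : 0 < 1/r := by positivity
    simp only [hq, hp]; intro h; nlinarith
  have key : a k / b k * (x / b k) ^ q = a khat / b khat * (y / b khat) ^ q := by
    have h0' : p * (a k / b k * (x / b k) ^ q - a khat / b khat * (y / b khat) ^ q) = 0 := by
      linear_combination h0
    rcases mul_eq_zero.1 h0' with h | h
    · exact absurd h hp0
    · linarith
  -- clear denominators in the first-order condition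
  have key' : a k * b khat * (x / b k) ^ q = a khat * b k * (y / b khat) ^ q := by
    have e : (b k * b khat) * (a k / b k * (x / b k) ^ q)
        = a k * b khat * (x / b k) ^ q := by field_simp
    have e2 : (b k * b khat) * (a khat / b khat * (y / b khat) ^ q)
        = a khat * b k * (y / b khat) ^ q := by field_simp
    rw [← e, ← e2, key]
  have hXq : (0:ℝ) < (x / b k) ^ q := Real.rpow_pos_of_pos (by positivity) q
  have hYq : (0:ℝ) < (y / b khat) ^ q := Real.rpow_pos_of_pos (by positivity) q
  have e1 : (y / b khat) ^ q = ((a k * b khat) / (a khat * b k)) * (x / b k) ^ q := by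
    rw [div_mul_eq_mul_div, eq_div_iff (by positivity)]
    linear_combination -key'
  have hq1 : 1/q = -(r/(r+1)) := by
    have hr1 : r + 1 ≠ 0 := by positivity
    have hr0 : r ≠ 0 := hr.ne'
    rw [div_eq_iff hq0, hq, hp]
    field_simp
    ring
  have e2 : y / b khat = ((a k * b khat) / (a khat * b k)) ^ (1/q) * (x / b k) := by
    have hYb : (0:ℝ) < y / b khat := by positivity
    have h3 : ((y / b khat) ^ q) ^ (1/q) = y / b khat := by
      rw [← Real.rpow_mul hYb.le, mul_one_div, div_self hq0, Real.rpow_one]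
    rw [← h3, e1, Real.mul_rpow (by positivity) hXq.le]
    congr 1
    rw [← Real.rpow_mul (by positivity : (0:ℝ) ≤ x / b k), mul_one_div, div_self hq0,
      Real.rpow_one]
  have hinv : ((a k * b khat) / (a khat * b k)) ^ (1/q)
      = ((a khat * b k) / (a k * b khat)) ^ (r/(r+1)) := by
    rw [hq1, Real.rpow_neg (by positivity), ← Real.inv_rpow (by positivity), inv_div]
  have expand : ((a khat * b k) / (a k * b khat)) ^ (r/(r+1))
      = (a khat ^ (r/(r+1)) * b k ^ (r/(r+1))) / (a k ^ (r/(r+1)) * b khat ^ (r/(r+1))) := by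
    rw [Real.div_rpow (by positivity) (by positivity), Real.mul_rpow hakh.le hbk.le,
      Real.mul_rpow hak.le hbkh.le]
  have bsplit : ∀ z : ℝ, 0 < z → z ^ ((1:ℝ)/(r+1)) = z / z ^ (r/(r+1)) := by
    intro z hz
    rw [eq_div_iff (Real.rpow_pos_of_pos hz _).ne', ← Real.rpow_add hz]
    rw [show 1/(r+1) + r/(r+1) = 1 by rw [← add_div, add_comm]; exact div_self (by positivity)]
    exact Real.rpow_one z
  have expand2 : ((b khat * a khat ^ r) / (b k * a k ^ r)) ^ (1/(r+1))
      = (b khat ^ ((1:ℝ)/(r+1)) * a khat ^ (r/(r+1)))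
        / (b k ^ ((1:ℝ)/(r+1)) * a k ^ (r/(r+1))) := by
    rw [Real.div_rpow (by positivity) (by positivity),
      Real.mul_rpow hbkh.le (by positivity), Real.mul_rpow hbk.le (by positivity),
      ← Real.rpow_mul hakh.le, ← Real.rpow_mul hak.le, mul_one_div]
  have e3 : y = ((a khat * b k) / (a k * b khat)) ^ (r/(r+1)) * (x / b k) * b khat := by
    rw [← hinv, mul_comm _ (b khat), ← mul_assoc]
    have := (div_eq_iff hbkh.ne').mp e2
    linarith [this]
  rw [e3, expand, expand2, bsplit (b k) hbk, bsplit (b khat) hbkh]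
  have hA1 : (0:ℝ) < a k ^ (r/(r+1)) := Real.rpow_pos_of_pos hak _
  have hA2 : (0:ℝ) < a khat ^ (r/(r+1)) := Real.rpow_pos_of_pos hakh _
  have hB1 : (0:ℝ) < b k ^ (r/(r+1)) := Real.rpow_pos_of_pos hbk _
  have hB2 : (0:ℝ) < b khat ^ (r/(r+1)) := Real.rpow_pos_of_pos hbkh _
  field_simp
end
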